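/- For every x₀ ∈ ℝ^{2m} and all reals ε, R, μ > 0 there exists a unique function p : ℝ^{2m} → ℝ of the form p(x) = −μ² + Σ_{j=0}^{m−1} c_j |x − x₀|^{2j} (with c_0, …, c_{m−1} ∈ ℝ) such that for every integer i with 0 ≤ i ≤ m−1 and every x on the sphere ∂B_{εR}(x₀), the i-th derivative of p in the outward radial direction at x equals minus the i-th outward radial derivative at x of the function x ↦ μ² + η₀((x − x₀)/ε) + (2m/β*) log|x − x₀|. Moreover, c_0 = −(2m/β*) log(2ε) + d_0(R) and c_j = (εR)^{−2j} d_j(R) for 1 ≤ j ≤ m−1, where d_0(R), …, d_{m−1}(R) depend only on m and R and satisfy d_j(R) = O(R^{−2}) as R → +∞ (i.e. there are constants C, R₁ > 0 depending only on m with |d_j(R)| ≤ C R^{−2} for all R ≥ R₁). -/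

import Mathlib

open MeasureTheory Real
noncomputable section

/-- The Laplacian of `u : ℝ^n → ℝ` at `x`, as the sum of second partial derivatives. -/
def lap {n : ℕ} (u : EuclideanSpace ℝ (Fin n) → ℝ) (x : EuclideanSpace ℝ (Fin n)) : ℝ :=
  ∑ i : Fin n, fderiv ℝ (fun y => fderiv ℝ u y (EuclideanSpace.single i 1)) x
    (EuclideanSpace.single i 1)

/-- The `l`-fold iterated Laplacian `Δ^l u`. -/
def iterLap {n : ℕ} (l : ℕ) (u : EuclideanSpace ℝ (Fin n) → ℝ) :
    EuclideanSpace ℝ (Fin n) → ℝ := lap^[l] u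

/-- The Adams critical exponent `β* = 2^{2m} π^m m!`. -/
def betaStar (m : ℕ) : ℝ := 2^(2*m) * Real.pi^m * (Nat.factorial m : ℝ)

/-- `ω_{2m} = 2^{m+1} π^m / (2m−1)‼`, the volume of the unit sphere `S^{2m} ⊂ ℝ^{2m+1}`. -/
def omega2m (m : ℕ) : ℝ := 2^(m+1) * Real.pi^m / (Nat.doubleFactorial (2*m - 1) : ℝ)

/-- The standard bubble `η₀(y) = −(m/β*) log(1 + |y|²/4)`. -/
def eta0 (m : ℕ) (y : EuclideanSpace ℝ (Fin (2*m))) : ℝ :=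
  -((m : ℝ) / betaStar m) * Real.log (1 + ‖y‖^2 / 4)

/-- The `i`-th outward radial derivative of `f` at `x`, relative to the center `x₀`:
the `i`-th directional derivative of `f` at `x` along the unit vector `(x − x₀)/|x − x₀|`. -/
def radialDeriv {n : ℕ} (i : ℕ) (x₀ : EuclideanSpace ℝ (Fin n))
    (f : EuclideanSpace ℝ (Fin n) → ℝ) (x : EuclideanSpace ℝ (Fin n)) : ℝ :=
  iteratedDeriv i (fun t : ℝ => f (x + t • (‖x - x₀‖⁻¹ • (x - x₀)))) 0

section AuxStatement17
open Polynomial Topology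

lemma iteratedDeriv_polyEval (n : ℕ) (p : Polynomial ℝ) (x : ℝ) :
    iteratedDeriv n (fun t => p.eval t) x = (Polynomial.derivative^[n] p).eval x := by
  induction n generalizing p with
  | zero => simp
  | succ n IH =>
    rw [iteratedDeriv_succ']
    have : (deriv fun t => p.eval t) = fun t => (Polynomial.derivative p).eval t := by
      funext t; exact Polynomial.deriv p
    rw [this, IH, Function.iterate_succ_apply]

lemma iteratedDeriv_const_mul_uncond (n : ℕ) (c : ℝ) (f : ℝ → ℝ) (x : ℝ) :
    iteratedDeriv n (fun t => c * f t) x = c * iteratedDeriv n f x := by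
  induction n generalizing f with
  | zero => simp
  | succ n IH =>
    rw [iteratedDeriv_succ', iteratedDeriv_succ']
    have : (deriv fun t => c * f t) = fun t => c * deriv f t := deriv_const_mul_field' c
    rw [this, IH]

lemma iteratedDeriv_const_sub_aux (n : ℕ) (hn : 0 < n) (K : ℝ) (f : ℝ → ℝ) (x : ℝ) :
    iteratedDeriv n (fun t => K - f t) x = - iteratedDeriv n f x := by
  obtain ⟨k, rfl⟩ := Nat.exists_eq_succ_of_ne_zero hn.ne'
  rw [iteratedDeriv_succ', iteratedDeriv_succ']
  have : (deriv fun t => K - f t) = fun t => -1 * deriv f t := by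
    funext t; rw [deriv_const_sub]; ring
  rw [this, iteratedDeriv_const_mul_uncond]; ring

lemma diffAt_iteratedDeriv {F : ℝ → ℝ} {y : ℝ} (h : ContDiffAt ℝ (⊤ : ℕ∞) F y) (n : ℕ) :
    DifferentiableAt ℝ (iteratedDeriv n F) y := by
  have h' : ContDiffWithinAt ℝ ((⊤ : ℕ∞) : WithTop ℕ∞) F Set.univ y := h.contDiffWithinAt
  have := h'.differentiableWithinAt_iteratedDerivWithin (m := n)
    (by exact_mod_cast (WithTop.coe_lt_top n : (n:ℕ∞) < ⊤)) (by simp [uniqueDiffOn_univ])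
  rw [iteratedDerivWithin_univ] at this
  exact this.differentiableAt Filter.univ_mem

lemma iteratedDeriv_comp_const_mul_local {F : ℝ → ℝ} {s : Set ℝ} (hs : IsOpen s)
    (hF : ContDiffOn ℝ (⊤ : ℕ∞) F s) (c : ℝ) (n : ℕ) :
    ∀ x, c * x ∈ s → iteratedDeriv n (fun t => F (c * t)) x
      = c ^ n * iteratedDeriv n F (c * x) := by
  induction n with
  | zero => intro x _; simp
  | succ n IH =>
    intro x hx
    have hopen : IsOpen {y : ℝ | c * y ∈ s} := hs.preimage (by continuity)
    have hev : iteratedDeriv n (fun t => F (c * t))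
        =ᶠ[𝓝 x] fun y => c ^ n * iteratedDeriv n F (c * y) := by
      filter_upwards [hopen.mem_nhds hx] with y hy using IH y hy
    rw [iteratedDeriv_succ, hev.deriv_eq, deriv_const_mul_field]
    have hdF : DifferentiableAt ℝ (iteratedDeriv n F) (c * x) :=
      diffAt_iteratedDeriv (hF.contDiffAt (hs.mem_nhds hx)) n
    have h1 : HasDerivAt (fun y : ℝ => c * y) c x := by
      simpa using (hasDerivAt_id x).const_mul c
    have h2 := hdF.hasDerivAt.comp x h1
    have h3 : deriv (fun y => iteratedDeriv n F (c * y)) x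
        = deriv (iteratedDeriv n F) (c * x) * c := by
      exact h2.deriv
    rw [h3, ← iteratedDeriv_succ]
    ring


variable (m : ℕ)

/-- The linear map of the interpolation system. -/
def Tmap : (Fin m → ℝ) →ₗ[ℝ] (Fin m → ℝ) where
  toFun a i := ∑ j : Fin m, a j * ((2 * (j : ℕ)).descFactorial (i : ℕ) : ℝ)
  map_add' a b := by
    funext i; simp [add_mul, Finset.sum_add_distrib]
  map_smul' r a := by
    funext i; simp [Finset.mul_sum, mul_assoc]

lemma neg_one_pow_sub {i k : ℕ} (h : i ≤ k) (hk : Even k) :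
    (-1 : ℝ) ^ (k - i) = (-1 : ℝ) ^ i := by
  have h1 : (-1 : ℝ) ^ (k - i) * (-1 : ℝ) ^ i = 1 := by
    rw [← pow_add, Nat.sub_add_cancel h, hk.neg_one_pow]
  have h2 : ((-1 : ℝ) ^ i) * ((-1 : ℝ) ^ i) = 1 := by
    rw [← pow_add]; exact Even.neg_one_pow ⟨i, rfl⟩
  have hB : ((-1 : ℝ) ^ i) ≠ 0 := pow_ne_zero _ (by norm_num)
  exact mul_right_cancel₀ hB (h1.trans h2.symm)

lemma Tmap_injective (hm : 1 ≤ m) : Function.Injective (Tmap m) := by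
  rw [← LinearMap.ker_eq_bot, LinearMap.ker_eq_bot']
  intro a ha
  have h : ∀ i : Fin m, ∑ j : Fin m, a j * ((2 * (j : ℕ)).descFactorial (i : ℕ) : ℝ) = 0 :=
    fun i => congrFun ha i
  set p : Polynomial ℝ := ∑ j : Fin m, C (a j) * X ^ (2 * (j : ℕ)) with hp
  have hder : ∀ i : ℕ, Polynomial.derivative^[i] p
      = ∑ j : Fin m, C (a j) * (((2 * (j : ℕ)).descFactorial i : ℝ) • X ^ (2 * (j : ℕ) - i)) := by
    intro i
    rw [hp, Polynomial.iterate_derivative_sum]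
    refine Finset.sum_congr rfl fun j _ => ?_
    rw [Polynomial.iterate_derivative_C_mul, Polynomial.iterate_derivative_X_pow_eq_smul]
  have heval1 : ∀ i : ℕ, (Polynomial.derivative^[i] p).eval 1
      = ∑ j : Fin m, a j * ((2 * (j : ℕ)).descFactorial i : ℝ) := by
    intro i
    rw [hder i]
    simp only [Polynomial.eval_finset_sum, Polynomial.eval_mul, Polynomial.eval_C,
      Polynomial.eval_smul, Polynomial.eval_pow, Polynomial.eval_X, smul_eq_mul, one_pow,
      mul_one]
  have hevalneg : ∀ i : ℕ, (Polynomial.derivative^[i] p).eval (-1)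
      = (-1 : ℝ) ^ i * (Polynomial.derivative^[i] p).eval 1 := by
    intro i
    rw [hder i]
    simp only [Polynomial.eval_finset_sum, Polynomial.eval_mul, Polynomial.eval_C,
      Polynomial.eval_smul, Polynomial.eval_pow, Polynomial.eval_X, smul_eq_mul,
      Finset.mul_sum]
    refine Finset.sum_congr rfl fun j _ => ?_
    rcases le_or_gt i (2 * (j : ℕ)) with hle | hlt
    · have : (-1 : ℝ) ^ (2 * (j : ℕ) - i) = (-1 : ℝ) ^ i :=
        neg_one_pow_sub hle (even_two_mul _)
      rw [this]; ring
    · rw [Nat.descFactorial_eq_zero_iff_lt.mpr hlt]; simp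
  by_cases hp0 : p = 0
  · funext j
    have : p.coeff (2 * (j : ℕ)) = a j := by
      rw [hp, Polynomial.finset_sum_coeff]
      rw [Finset.sum_eq_single j]
      · simp [Polynomial.coeff_C_mul, Polynomial.coeff_X_pow]
      · intro j' _ hne
        have hne2 : (2 * (j' : ℕ)) ≠ 2 * (j : ℕ) := by
          intro h; exact hne (Fin.ext (by omega))
        rw [Polynomial.coeff_C_mul, Polynomial.coeff_X_pow, if_neg (Ne.symm hne2), mul_zero]
      · intro h; exact absurd (Finset.mem_univ j) h
    rw [hp0] at this
    simpa using this.symm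
  · exfalso
    have hroot1 : ∀ k ≤ m - 1, (Polynomial.derivative^[k] p).IsRoot 1 := by
      intro k hk
      have hkm : k < m := by omega
      rw [Polynomial.IsRoot, heval1 k]
      exact h ⟨k, hkm⟩
    have hrootneg : ∀ k ≤ m - 1, (Polynomial.derivative^[k] p).IsRoot (-1) := by
      intro k hk
      rw [Polynomial.IsRoot, hevalneg k, heval1 k]
      have hkm : k < m := by omega
      rw [show (∑ j : Fin m, a j * ((2 * (j : ℕ)).descFactorial k : ℝ)) = 0 from h ⟨k, hkm⟩]
      ring
    have hnzd : ∀ k ≤ m - 1, k ≠ 0 → (k : ℝ) ∈ nonZeroDivisors ℝ :=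
      fun k _ hk => mem_nonZeroDivisors_of_ne_zero (Nat.cast_ne_zero.mpr hk)
    have h1 := Polynomial.lt_rootMultiplicity_of_isRoot_iterate_derivative_of_mem_nonZeroDivisors'
      hp0 hroot1 hnzd
    have h2 := Polynomial.lt_rootMultiplicity_of_isRoot_iterate_derivative_of_mem_nonZeroDivisors'
      hp0 hrootneg hnzd
    have hdvd1 : (X - C (1 : ℝ)) ^ m ∣ p :=
      dvd_trans (pow_dvd_pow _ (by omega)) (Polynomial.pow_rootMultiplicity_dvd p 1)
    have hdvd2 : (X - C (-1 : ℝ)) ^ m ∣ p :=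
      dvd_trans (pow_dvd_pow _ (by omega)) (Polynomial.pow_rootMultiplicity_dvd p (-1))
    have hcop : IsCoprime ((X - C (1 : ℝ)) ^ m) ((X - C (-1 : ℝ)) ^ m) := by
      refine IsCoprime.pow ?_
      apply Polynomial.isCoprime_X_sub_C_of_isUnit_sub
      norm_num
    have hdvd : (X - C (1 : ℝ)) ^ m * (X - C (-1 : ℝ)) ^ m ∣ p := hcop.mul_dvd hdvd1 hdvd2
    have hdeg := Polynomial.natDegree_le_of_dvd hdvd hp0
    have hdegmul : ((X - C (1 : ℝ)) ^ m * (X - C (-1 : ℝ)) ^ m).natDegree = 2 * m := by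
      rw [Polynomial.natDegree_mul (pow_ne_zero _ (Polynomial.X_sub_C_ne_zero 1))
        (pow_ne_zero _ (Polynomial.X_sub_C_ne_zero (-1)))]
      rw [Polynomial.natDegree_pow, Polynomial.natDegree_pow, Polynomial.natDegree_X_sub_C,
        Polynomial.natDegree_X_sub_C]
      ring
    have hdegp : p.natDegree ≤ 2 * (m - 1) := by
      rw [hp]
      refine (Polynomial.natDegree_sum_le _ _).trans ?_
      rw [Finset.fold_max_le]
      refine ⟨by omega, fun j _ => ?_⟩
      refine (Polynomial.natDegree_C_mul_X_pow_le _ _).trans (by omega)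
    omega


/-- Numerator polynomials (outer variable `s = 1+τ`, inner variable `δ`). -/
def NN : ℕ → Polynomial (Polynomial ℝ)
  | 0 => 1
  | (k+1) => (NN k).derivative * (X^3 + C (Polynomial.C 4 * Polynomial.X) * X)
      - ((k : Polynomial (Polynomial ℝ)) + 1)
        * (3 * X^2 + C (Polynomial.C 4 * Polynomial.X)) * NN k

/-- The mapped numerator polynomial, for a fixed value of `δ`. -/
def NNd (δ : ℝ) (k : ℕ) : Polynomial ℝ := (NN k).map (Polynomial.evalRingHom δ)

lemma NNd_zero (δ : ℝ) : NNd δ 0 = 1 := by simp [NNd, NN]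

lemma NNd_succ (δ : ℝ) (k : ℕ) :
    NNd δ (k+1) = (NNd δ k).derivative * (X^3 + C (4*δ) * X)
      - ((k : Polynomial ℝ) + 1) * (3 * X^2 + C (4*δ)) * NNd δ k := by
  simp only [NNd, NN, Polynomial.map_sub, Polynomial.map_mul, Polynomial.map_add,
    Polynomial.map_pow, Polynomial.map_X, Polynomial.map_C, Polynomial.map_natCast,
    Polynomial.map_one, Polynomial.map_ofNat, Polynomial.derivative_map]
  simp only [Polynomial.coe_evalRingHom, Polynomial.eval_mul, Polynomial.eval_C,
    Polynomial.eval_X]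

lemma iteratedDeriv_u (δ : ℝ) (hδ : 0 ≤ δ) (k : ℕ) :
    ∀ τ ∈ Set.Ioi (-1 : ℝ),
      iteratedDeriv k (fun t : ℝ => ((1+t)^3 + 4*δ*(1+t))⁻¹) τ
        = (NNd δ k).eval (1+τ) / ((1+τ)^3 + 4*δ*(1+τ))^(k+1) := by
  have hqpos : ∀ t : ℝ, t ∈ Set.Ioi (-1:ℝ) → 0 < (1+t)^3 + 4*δ*(1+t) := by
    intro t ht
    have h1 : 0 < 1 + t := by simpa [Set.mem_Ioi] using by linarith [Set.mem_Ioi.mp ht]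
    nlinarith [pow_pos h1 3]
  induction k with
  | zero =>
    intro τ hτ
    simp only [iteratedDeriv_zero, NNd_zero, Polynomial.eval_one, zero_add, pow_one]
    rw [inv_eq_one_div]
  | succ k IH =>
    intro τ hτ
    have hev : iteratedDeriv k (fun t : ℝ => ((1+t)^3 + 4*δ*(1+t))⁻¹)
        =ᶠ[𝓝 τ] fun t => (NNd δ k).eval (1+t) / ((1+t)^3 + 4*δ*(1+t))^(k+1) := by
      filter_upwards [isOpen_Ioi.mem_nhds hτ] with y hy using IH y hy
    rw [iteratedDeriv_succ, hev.deriv_eq]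
    have h1 : HasDerivAt (fun t : ℝ => 1+t) 1 τ := by
      simpa using (hasDerivAt_id τ).const_add 1
    have hnum : HasDerivAt (fun t : ℝ => (NNd δ k).eval (1+t))
        ((NNd δ k).derivative.eval (1+τ)) τ := by
      exact ((Polynomial.hasDerivAt (NNd δ k) (1+τ)).comp τ h1).congr_deriv (mul_one _)
    have hq : HasDerivAt (fun t : ℝ => (1+t)^3 + 4*δ*(1+t)) (3*(1+τ)^2 + 4*δ) τ := by
      have := (h1.pow 3).add (h1.const_mul (4*δ))
      exact this.congr_deriv (by norm_num)
    have hden : HasDerivAt (fun t : ℝ => ((1+t)^3 + 4*δ*(1+t))^(k+1))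
        ((k+1 : ℕ) * ((1+τ)^3 + 4*δ*(1+τ))^k * (3*(1+τ)^2 + 4*δ)) τ := by
      exact (hq.pow (k+1)).congr_deriv (by simp)
    have hQ := hqpos τ hτ
    have hdiv : HasDerivAt (fun t : ℝ => (NNd δ k).eval (1+t) / ((1+t)^3 + 4*δ*(1+t))^(k+1)) _ τ :=
      hnum.div hden (by positivity)
    rw [hdiv.deriv]
    rw [NNd_succ]
    set A := (NNd δ k).eval (1+τ)
    set A' := (NNd δ k).derivative.eval (1+τ)
    set Q := (1+τ)^3 + 4*δ*(1+τ) with hQdef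
    have hevalrec : ((NNd δ k).derivative * (X^3 + C (4*δ) * X)
        - ((k : Polynomial ℝ) + 1) * (3 * X^2 + C (4*δ)) * NNd δ k).eval (1+τ)
        = A' * Q - ((k:ℝ)+1) * (3*(1+τ)^2 + 4*δ) * A := by
      simp [Polynomial.eval_mul, Polynomial.eval_add, Polynomial.eval_pow, hQdef]; rfl
    rw [hevalrec]
    rw [div_eq_div_iff (by positivity) (by positivity)]
    push_cast
    ring

lemma NNd_eval_one (δ : ℝ) (k : ℕ) :
    (NNd δ k).eval 1 = ((NN k).eval (1 : Polynomial ℝ)).eval δ := by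
  rw [NNd, Polynomial.eval_map, Polynomial.eval₂_at_one]
  rfl

lemma u_bound (k : ℕ) : ∃ C > 0, ∀ δ ∈ Set.Icc (0:ℝ) 1,
    |iteratedDeriv k (fun t : ℝ => ((1+t)^3 + 4*δ*(1+t))⁻¹) 0| ≤ C := by
  obtain ⟨C, hC⟩ := (isCompact_Icc (a := (0:ℝ)) (b := 1)).exists_bound_of_continuousOn
    (f := fun δ => ((NN k).eval (1 : Polynomial ℝ)).eval δ)
    ((Polynomial.continuous _).continuousOn)
  refine ⟨max C 1, lt_of_lt_of_le zero_lt_one (le_max_right _ _), ?_⟩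
  intro δ hδ
  rw [iteratedDeriv_u δ hδ.1 k 0 (by norm_num : (0:ℝ) ∈ Set.Ioi (-1:ℝ))]
  have hden : (1:ℝ) ≤ ((1+(0:ℝ))^3 + 4*δ*(1+0))^(k+1) := by
    have h : (1:ℝ) ≤ (1+(0:ℝ))^3 + 4*δ*(1+0) := by nlinarith [hδ.1]
    calc (1:ℝ) = 1^(k+1) := (one_pow _).symm
    _ ≤ ((1+(0:ℝ))^3 + 4*δ*(1+0))^(k+1) := pow_le_pow_left₀ (by norm_num) h _
  rw [abs_div]
  have habs : |((1+(0:ℝ))^3 + 4*δ*(1+0))^(k+1)| = ((1+(0:ℝ))^3 + 4*δ*(1+0))^(k+1) := by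
    apply abs_of_pos; positivity
  rw [habs]
  refine (div_le_self (abs_nonneg _) hden).trans ?_
  have h1 : ((1:ℝ)+0) = 1 := by norm_num
  rw [h1, NNd_eval_one]
  exact (hC δ hδ).trans (le_max_left _ _)

lemma hasDerivAt_logpart (δ : ℝ) (hδ : 0 ≤ δ) (τ : ℝ) (hτ : τ ∈ Set.Ioi (-1:ℝ)) :
    HasDerivAt (fun t : ℝ => Real.log (1/4 + δ * ((1+t)^2)⁻¹))
      (-8*δ * (((1+τ)^3 + 4*δ*(1+τ))⁻¹)) τ := by
  have h1pos : 0 < 1 + τ := by linarith [Set.mem_Ioi.mp hτ]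
  have h1' : (1+τ) ≠ 0 := ne_of_gt h1pos
  have h1 : HasDerivAt (fun t : ℝ => 1+t) 1 τ := by
    simpa using (hasDerivAt_id τ).const_add 1
  have h2 : HasDerivAt (fun t : ℝ => (1+t)^2) (2*(1+τ)) τ := by
    exact (h1.pow 2).congr_deriv (by norm_num)
  have h3 := h2.inv (pow_ne_zero 2 h1')
  have h4 := (h3.const_mul δ).const_add (1/4 : ℝ)
  have harg_pos : 0 < 1/4 + δ*((1+τ)^2)⁻¹ := by positivity
  have h5 := h4.log (ne_of_gt harg_pos)
  simp only [Pi.inv_apply] at h5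
  convert h5 using 1
  have hq : (1+τ)^3 + 4*δ*(1+τ) ≠ 0 := by positivity
  field_simp
  ring

def Tequiv (m : ℕ) (hm : 1 ≤ m) : (Fin m → ℝ) ≃ₗ[ℝ] (Fin m → ℝ) :=
  LinearEquiv.ofBijective (Tmap m)
    ⟨Tmap_injective m hm, (LinearMap.injective_iff_surjective).mp (Tmap_injective m hm)⟩

lemma Tequiv_apply (m : ℕ) (hm : 1 ≤ m) (a : Fin m → ℝ) : Tequiv m hm a = Tmap m a := rfl

lemma Tequiv_symm_bound (m : ℕ) (hm : 1 ≤ m) :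
    ∃ C > 0, ∀ v : Fin m → ℝ, ∀ j : Fin m, |((Tequiv m hm).symm v) j| ≤ C * ‖v‖ := by
  set L := LinearMap.toContinuousLinearMap ((Tequiv m hm).symm.toLinearMap)
  refine ⟨‖L‖ + 1, by positivity, fun v j => ?_⟩
  have h1 : |((Tequiv m hm).symm v) j| ≤ ‖(Tequiv m hm).symm v‖ := by
    exact norm_le_pi_norm ((Tequiv m hm).symm v) j
  have h2 : ‖(Tequiv m hm).symm v‖ = ‖L v‖ := rfl
  refine h1.trans ?_
  rw [h2]
  refine (L.le_opNorm v).trans ?_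
  nlinarith [norm_nonneg v, L.opNorm_nonneg]

def e0 (m : ℕ) (hm : 1 ≤ m) : Fin m → ℝ := Pi.single ⟨0, hm⟩ 1

lemma Tmap_e0 (m : ℕ) (hm : 1 ≤ m) : Tmap m (e0 m hm) = e0 m hm := by
  funext i
  show (∑ j : Fin m, (e0 m hm) j * ((2 * (j:ℕ)).descFactorial (i:ℕ) : ℝ)) = _
  rw [Finset.sum_eq_single (⟨0, hm⟩ : Fin m)]
  · simp only [e0, Pi.single_eq_same, one_mul]
    rcases Nat.eq_zero_or_pos (i : ℕ) with h0 | hpos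
    · have : i = (⟨0, hm⟩ : Fin m) := Fin.ext (by simpa using h0)
      rw [this]; simp
    · have hdesc : (2 * ((⟨0, hm⟩ : Fin m) : ℕ)).descFactorial (i:ℕ) = 0 := by
        apply Nat.descFactorial_eq_zero_iff_lt.mpr; simpa using hpos
      have hne : i ≠ (⟨0, hm⟩ : Fin m) := by
        intro h; rw [h] at hpos; simp at hpos
      rw [hdesc]
      simp [Pi.single_eq_of_ne hne]
  · intro j _ hj
    simp [e0, Pi.single_eq_of_ne hj]
  · intro h; exact absurd (Finset.mem_univ _) h

lemma Tequiv_symm_e0 (m : ℕ) (hm : 1 ≤ m) :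
    (Tequiv m hm).symm (e0 m hm) = e0 m hm := by
  apply (Tequiv m hm).injective
  rw [LinearEquiv.apply_symm_apply, Tequiv_apply, Tmap_e0]

def ufun (δ : ℝ) : ℝ → ℝ := fun t => ((1+t)^3 + 4*δ*(1+t))⁻¹

def gfun (κ δ : ℝ) : ℝ → ℝ := fun τ => κ * Real.log (1/4 + δ * ((1+τ)^2)⁻¹)

def gcoef (κ δ : ℝ) (i : ℕ) : ℝ := iteratedDeriv i (gfun κ δ) 0

lemma gfun_contDiffOn (κ δ : ℝ) (hδ : 0 ≤ δ) :
    ContDiffOn ℝ (⊤:ℕ∞) (gfun κ δ) (Set.Ioi (-1:ℝ)) := by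
  intro τ hτ
  apply ContDiffAt.contDiffWithinAt
  have h1pos : 0 < 1 + τ := by linarith [Set.mem_Ioi.mp hτ]
  have hsq : ContDiffAt ℝ (⊤:ℕ∞) (fun t : ℝ => (1+t)^2) τ :=
    (contDiffAt_const.add contDiffAt_id).pow 2
  have hinv := hsq.inv (pow_ne_zero 2 (ne_of_gt h1pos))
  have harg : ContDiffAt ℝ (⊤:ℕ∞) (fun t : ℝ => 1/4 + δ * ((1+t)^2)⁻¹) τ :=
    (contDiffAt_const (c := (1/4:ℝ))).add ((contDiffAt_const (c := δ)).mul hinv)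
  have hpos : 0 < 1/4 + δ * ((1+τ)^2)⁻¹ := by positivity
  exact contDiffAt_const.mul (harg.log (ne_of_gt hpos))

lemma gcoef_zero (κ δ : ℝ) : gcoef κ δ 0 = κ * Real.log (1/4 + δ) := by
  simp [gcoef, gfun]

lemma gcoef_succ (κ δ : ℝ) (hδ : 0 ≤ δ) (k : ℕ) :
    gcoef κ δ (k+1) = κ * ((-8*δ) * iteratedDeriv k (ufun δ) 0) := by
  rw [gcoef]
  show iteratedDeriv (k+1) (fun τ => κ * Real.log (1/4 + δ * ((1+τ)^2)⁻¹)) 0 = _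
  rw [iteratedDeriv_const_mul_uncond]
  congr 1
  rw [iteratedDeriv_succ']
  have hev : deriv (fun τ : ℝ => Real.log (1/4 + δ * ((1+τ)^2)⁻¹))
      =ᶠ[𝓝 (0:ℝ)] fun τ => (-8*δ) * ufun δ τ := by
    filter_upwards [isOpen_Ioi.mem_nhds (show (0:ℝ) ∈ Set.Ioi (-1:ℝ) by norm_num)] with y hy
    exact (hasDerivAt_logpart δ hδ y hy).deriv
  rw [hev.iteratedDeriv_eq k, iteratedDeriv_const_mul_uncond]

lemma gcoef_bound (κ : ℝ) (M : ℕ) : ∃ C > 0, ∀ i, 1 ≤ i → i ≤ M →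
    ∀ δ ∈ Set.Icc (0:ℝ) 1, |gcoef κ δ i| ≤ C * δ := by
  choose Cu hCupos hCu using fun k => u_bound k
  set B := (∑ k ∈ Finset.range M, Cu k) + 1 with hB
  have hBpos : 0 < B := by
    have : 0 ≤ ∑ k ∈ Finset.range M, Cu k :=
      Finset.sum_nonneg fun k _ => (hCupos k).le
    linarith
  refine ⟨(|κ|+1) * 8 * B, by positivity, ?_⟩
  intro i hi1 hiM δ hδ
  obtain ⟨k, rfl⟩ := Nat.exists_eq_succ_of_ne_zero (by omega : i ≠ 0)
  rw [gcoef_succ κ δ hδ.1 k]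
  have hk : Cu k ≤ B := by
    have : Cu k ≤ ∑ k' ∈ Finset.range M, Cu k' :=
      Finset.single_le_sum (fun k' _ => (hCupos k').le) (Finset.mem_range.mpr (by omega))
    linarith
  have hu := hCu k δ hδ
  rw [abs_mul, abs_mul]
  have h8 : |(-8 : ℝ)*δ| = 8*δ := by rw [abs_of_nonpos (by nlinarith [hδ.1])]; ring
  calc |κ| * (|(-8)*δ| * |iteratedDeriv k (fun t : ℝ => ((1+t)^3 + 4*δ*(1+t))⁻¹) 0|)
      ≤ |κ| * ((8*δ) * Cu k) := by
        rw [h8]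
        refine mul_le_mul_of_nonneg_left ?_ (abs_nonneg κ)
        exact mul_le_mul_of_nonneg_left hu (by nlinarith [hδ.1])
    _ ≤ (|κ|+1) * ((8*δ) * B) := by
        refine mul_le_mul (by linarith [abs_nonneg κ]) ?_ ?_ (by positivity)
        · exact mul_le_mul_of_nonneg_left hk (by linarith [hδ.1])
        · have : (0:ℝ) ≤ 8*δ := by linarith [hδ.1]
          exact mul_nonneg this (hCupos k).le
    _ = (|κ|+1) * 8 * B * δ := by ring

lemma gcoef_zero_bound (κ δ : ℝ) (hδ : 0 ≤ δ) :
    |gcoef κ δ 0 + κ * (2 * Real.log 2)| ≤ (|κ|+1) * 4 * δ := by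
  rw [gcoef_zero]
  have h14 : (1/4 + δ : ℝ) = (1 + 4*δ)/4 := by ring
  have hpos : (0:ℝ) < 1 + 4*δ := by linarith
  have hlog : Real.log (1/4 + δ) = Real.log (1 + 4*δ) - Real.log 4 := by
    rw [h14, Real.log_div (ne_of_gt hpos) (by norm_num)]
  have hlog4 : Real.log 4 = 2 * Real.log 2 := by
    rw [show (4:ℝ) = 2^2 by norm_num, Real.log_pow]; push_cast; ring
  have hexp : κ * Real.log (1/4 + δ) + κ * (2 * Real.log 2) = κ * Real.log (1 + 4*δ) := by
    rw [hlog, hlog4]; ring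
  rw [hexp, abs_mul]
  have h1 : |Real.log (1 + 4*δ)| ≤ 4*δ := by
    rw [abs_of_nonneg (Real.log_nonneg (by linarith))]
    have := Real.log_le_sub_one_of_pos hpos
    linarith
  nlinarith [abs_nonneg κ, Real.log_nonneg (show (1:ℝ) ≤ 1+4*δ by linarith)]

lemma sum_identity (m : ℕ) {r : ℝ} (hr : r ≠ 0) (cv : ℕ → ℝ) (i : ℕ) :
    ∑ j ∈ Finset.range m, cv j * (((2*j).descFactorial i : ℝ) * r^(2*j-i))
      = (r⁻¹)^i * ∑ j : Fin m, (cv (j:ℕ) * r^(2*(j:ℕ))) * (((2*(j:ℕ)).descFactorial i : ℝ)) := by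
  rw [Finset.mul_sum, Finset.sum_range]
  refine Finset.sum_congr rfl fun j _ => ?_
  rcases le_or_gt i (2*(j:ℕ)) with hle | hlt
  · have hpow : r^(2*(j:ℕ)-i) * r^i = r^(2*(j:ℕ)) := by
      rw [← pow_add, Nat.sub_add_cancel hle]
    have hri : r^i ≠ 0 := pow_ne_zero _ hr
    rw [inv_pow]
    rw [eq_comm, inv_mul_eq_iff_eq_mul₀ hri]
    rw [← hpow]; ring
  · rw [Nat.descFactorial_eq_zero_iff_lt.mpr hlt]; simp

lemma shifted_point {n : ℕ} (x₀ x : EuclideanSpace ℝ (Fin n)) {r : ℝ} (hr : 0 < r)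
    (hnorm : ‖x - x₀‖ = r) (t : ℝ) :
    x + t • (‖x - x₀‖⁻¹ • (x - x₀)) - x₀ = (1 + t/r) • (x - x₀) := by
  rw [hnorm, smul_smul, add_sub_right_comm, add_smul, one_smul, div_eq_mul_inv]

lemma radialDeriv_poly {n : ℕ} (x₀ x : EuclideanSpace ℝ (Fin n)) {r : ℝ} (hr : 0 < r)
    (hx : x ∈ Metric.sphere x₀ r) (cv : ℕ → ℝ) (M : ℕ) (μ2 : ℝ) (i : ℕ) :
    radialDeriv i x₀ (fun y => μ2 + ∑ j ∈ Finset.range M, cv j * ‖y - x₀‖^(2*j)) x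
      = (Polynomial.derivative^[i]
          (C μ2 + ∑ j ∈ Finset.range M, C (cv j) * (X + C r)^(2*j))).eval 0 := by
  have hnorm : ‖x - x₀‖ = r := by rwa [mem_sphere_iff_norm] at hx
  rw [radialDeriv]
  have hfun : (fun t : ℝ => μ2 + ∑ j ∈ Finset.range M,
        cv j * ‖(x + t • (‖x - x₀‖⁻¹ • (x - x₀))) - x₀‖^(2*j))
      = fun t => (C μ2 + ∑ j ∈ Finset.range M, C (cv j) * (X + C r)^(2*j)).eval t := by
    funext t
    rw [Polynomial.eval_add, Polynomial.eval_C, Polynomial.eval_finset_sum]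
    congr 1
    refine Finset.sum_congr rfl fun j _ => ?_
    rw [shifted_point x₀ x hr hnorm t]
    rw [norm_smul, Real.norm_eq_abs, hnorm]
    rw [mul_pow, Even.pow_abs (even_two_mul j)]
    rw [Polynomial.eval_mul, Polynomial.eval_C, Polynomial.eval_pow, Polynomial.eval_add,
      Polynomial.eval_X, Polynomial.eval_C]
    congr 2
    rw [← mul_pow]
    rw [add_comm t r]
    field_simp
  rw [hfun, iteratedDeriv_polyEval]

lemma eval_iter_poly (M i : ℕ) (μ2 r : ℝ) (cv : ℕ → ℝ) :
    (Polynomial.derivative^[i]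
        (C μ2 + ∑ j ∈ Finset.range M, C (cv j) * (X + C r)^(2*j))).eval 0
    = (if i = 0 then μ2 else 0)
      + ∑ j ∈ Finset.range M, cv j * (((2*j).descFactorial i : ℝ) * r^(2*j-i)) := by
  have hadd : Polynomial.derivative^[i]
      (C μ2 + ∑ j ∈ Finset.range M, C (cv j) * (X + C r)^(2*j))
    = Polynomial.derivative^[i] (C μ2)
      + Polynomial.derivative^[i] (∑ j ∈ Finset.range M, C (cv j) * (X + C r)^(2*j)) := by
    induction i with
    | zero => simp
    | succ i IH => rw [Function.iterate_succ_apply', IH, Polynomial.derivative_add,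
        Function.iterate_succ_apply', Function.iterate_succ_apply']
  rw [hadd, Polynomial.eval_add]
  congr 1
  · rcases Nat.eq_zero_or_pos i with h0 | hpos
    · subst h0; simp
    · rw [Polynomial.iterate_derivative_C hpos, if_neg (by omega)]
      simp
  · rw [Polynomial.iterate_derivative_sum, Polynomial.eval_finset_sum]
    refine Finset.sum_congr rfl fun j _ => ?_
    rw [Polynomial.iterate_derivative_C_mul, Polynomial.iterate_derivative_X_add_pow]
    rw [Polynomial.eval_mul, Polynomial.eval_C, Polynomial.eval_smul]
    rw [Polynomial.eval_pow, Polynomial.eval_add, Polynomial.eval_X, Polynomial.eval_C]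
    simp [nsmul_eq_mul]

lemma betaStar_pos (m : ℕ) : 0 < betaStar m := by
  rw [betaStar]
  positivity

lemma radialDeriv_rhs (m : ℕ) (x₀ x : EuclideanSpace ℝ (Fin (2*m))) (ε R μ : ℝ)
    (hε : 0 < ε) (hR : 0 < R) (hx : x ∈ Metric.sphere x₀ (ε*R)) (i : ℕ) :
    radialDeriv i x₀ (fun y => μ^2 + eta0 m (ε⁻¹ • (y - x₀))
        + (2*(m:ℝ) / betaStar m) * Real.log ‖y - x₀‖) x
    = (if i = 0 then μ^2 + 2*((m:ℝ)/betaStar m) * Real.log ε else 0)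
      - ((ε*R)⁻¹)^i * gcoef ((m:ℝ)/betaStar m) ((R^2)⁻¹) i := by
  have hr : 0 < ε*R := mul_pos hε hR
  have hnorm : ‖x - x₀‖ = ε*R := by rwa [mem_sphere_iff_norm] at hx
  set r := ε*R with hrdef
  set κ := (m:ℝ)/betaStar m with hκdef
  set δ := (R^2)⁻¹ with hδdef
  have hδ : 0 ≤ δ := by positivity
  set K := μ^2 + 2*κ*Real.log ε with hKdef
  have hev : (fun t : ℝ => μ^2 + eta0 m (ε⁻¹ • ((x + t • (‖x - x₀‖⁻¹ • (x - x₀))) - x₀))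
        + (2*(m:ℝ) / betaStar m) * Real.log ‖(x + t • (‖x - x₀‖⁻¹ • (x - x₀))) - x₀‖)
      =ᶠ[𝓝 (0:ℝ)] fun t => K - gfun κ δ (r⁻¹ * t) := by
    have hmem : Set.Ioi (-r) ∈ 𝓝 (0:ℝ) := isOpen_Ioi.mem_nhds (by simpa using hr)
    filter_upwards [hmem] with t ht
    rw [shifted_point x₀ x hr hnorm t]
    set ρ := 1 + t/r with hρdef
    have hρ : 0 < ρ := by
      have h1 : -1 < t/r := by
        rw [lt_div_iff₀ hr]
        have := Set.mem_Ioi.mp ht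
        linarith
      rw [hρdef]; linarith
    have hvnorm : ‖ρ • (x - x₀)‖ = ρ * r := by
      rw [norm_smul, Real.norm_eq_abs, hnorm, abs_of_pos hρ]
    have hwnorm : ‖ε⁻¹ • (ρ • (x - x₀))‖ = R * ρ := by
      rw [norm_smul, hvnorm, Real.norm_eq_abs, abs_of_pos (inv_pos.mpr hε), hrdef]
      field_simp
    have heta : eta0 m (ε⁻¹ • (ρ • (x - x₀))) = -κ * Real.log (1 + (R*ρ)^2/4) := by
      rw [eta0, hwnorm, hκdef]
    rw [heta]
    have hρt : 1 + r⁻¹ * t = ρ := by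
      rw [hρdef, div_eq_mul_inv]; ring
    have hgf : gfun κ δ (r⁻¹ * t) = κ * Real.log (1/4 + δ * (ρ^2)⁻¹) := by
      rw [gfun, hρt]
    have hA : 0 < R * ρ := mul_pos hR hρ
    have e1 : (1/4 + δ * (ρ^2)⁻¹ : ℝ) = (1 + (R*ρ)^2/4)/((R*ρ)^2) := by
      rw [hδdef]
      field_simp
      ring
    have h2 : Real.log (1/4 + δ * (ρ^2)⁻¹)
        = Real.log (1 + (R*ρ)^2/4) - 2 * Real.log (R*ρ) := by
      rw [e1, Real.log_div (by positivity) (by positivity), Real.log_pow]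
      push_cast; ring
    have h3 : Real.log (R*ρ) = Real.log (ρ*r) - Real.log ε := by
      rw [show R*ρ = (ρ*r)/ε by rw [hrdef]; field_simp,
        Real.log_div (by positivity) (ne_of_gt hε)]
    rw [hgf, h2, h3, hvnorm, hKdef, hκdef]
    ring
  rw [radialDeriv, hev.iteratedDeriv_eq i]
  rcases Nat.eq_zero_or_pos i with h0 | hpos
  · subst h0
    rw [iteratedDeriv_zero, if_pos rfl, pow_zero, one_mul]
    have : r⁻¹ * 0 = (0:ℝ) := mul_zero _
    rw [this]
    rw [show gcoef κ δ 0 = gfun κ δ 0 from rfl, hKdef]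
  · rw [if_neg (by omega)]
    obtain ⟨k, rfl⟩ := Nat.exists_eq_succ_of_ne_zero hpos.ne'
    rw [iteratedDeriv_const_sub_aux (k+1) hpos K]
    rw [iteratedDeriv_comp_const_mul_local isOpen_Ioi (gfun_contDiffOn κ δ hδ) r⁻¹ (k+1) 0
      (by norm_num : r⁻¹ * 0 ∈ Set.Ioi (-1:ℝ))]
    rw [mul_zero]
    rw [show iteratedDeriv (k+1) (gfun κ δ) 0 = gcoef κ δ (k+1) from rfl, zero_sub]

def vvec (m : ℕ) (ε R : ℝ) : Fin m → ℝ := fun i =>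
  (if (i:ℕ) = 0 then -(2*((m:ℝ)/betaStar m))*Real.log ε else 0)
    + gcoef ((m:ℝ)/betaStar m) ((R^2)⁻¹) (i:ℕ)

def wtvec (m : ℕ) (R : ℝ) : Fin m → ℝ := fun i =>
  if (i:ℕ) = 0 then gcoef ((m:ℝ)/betaStar m) ((R^2)⁻¹) 0 + ((m:ℝ)/betaStar m)*(2*Real.log 2)
  else gcoef ((m:ℝ)/betaStar m) ((R^2)⁻¹) (i:ℕ)

def avec (m : ℕ) (hm : 1 ≤ m) (ε R : ℝ) : Fin m → ℝ := (Tequiv m hm).symm (vvec m ε R)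

def dfn (m : ℕ) (hm : 1 ≤ m) : ℕ → ℝ → ℝ := fun j R =>
  if h : j < m then ((Tequiv m hm).symm (wtvec m R)) ⟨j,h⟩ else 0

def cfn (m : ℕ) (hm : 1 ≤ m) (ε R : ℝ) : ℕ → ℝ := fun j =>
  if h : j < m then (((ε*R)^(2*j))⁻¹) * avec m hm ε R ⟨j,h⟩ else 0

lemma vvec_eq_wtvec (m : ℕ) (hm : 1 ≤ m) (ε R : ℝ) (hε : 0 < ε) :
    vvec m ε R = wtvec m R - (2*((m:ℝ)/betaStar m)*Real.log (2*ε)) • e0 m hm := by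
  funext i
  simp only [vvec, wtvec, Pi.sub_apply, Pi.smul_apply, smul_eq_mul, e0]
  by_cases h0 : (i:ℕ) = 0
  · have hi : i = (⟨0, hm⟩ : Fin m) := Fin.ext (by simpa using h0)
    rw [if_pos h0, if_pos h0, hi, Pi.single_eq_same]
    rw [Real.log_mul (by norm_num) (ne_of_gt hε)]
    ring
  · have hi : i ≠ (⟨0, hm⟩ : Fin m) := by
      intro h; rw [h] at h0; simp at h0
    rw [if_neg h0, if_neg h0, Pi.single_eq_of_ne hi]
    ring

lemma avec_eq (m : ℕ) (hm : 1 ≤ m) (ε R : ℝ) (hε : 0 < ε) (j : Fin m) :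
    avec m hm ε R j = dfn m hm (j:ℕ) R
      - (if (j:ℕ) = 0 then 2*((m:ℝ)/betaStar m)*Real.log (2*ε) else 0) := by
  rw [avec, vvec_eq_wtvec m hm ε R hε, map_sub, LinearEquiv.map_smul, Tequiv_symm_e0,
    dfn, dif_pos j.isLt]
  simp only [Pi.sub_apply, Pi.smul_apply, smul_eq_mul, Fin.eta]
  congr 1
  by_cases h0 : (j:ℕ) = 0
  · have hj : j = (⟨0, hm⟩ : Fin m) := Fin.ext (by simpa using h0)
    rw [if_pos h0, hj, e0, Pi.single_eq_same, mul_one]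
  · have hj : j ≠ (⟨0, hm⟩ : Fin m) := by
      intro h; rw [h] at h0; simp at h0
    rw [if_neg h0, e0, Pi.single_eq_of_ne hj, mul_zero]

lemma key_iff (m : ℕ) (hm : 1 ≤ m) (x₀ : EuclideanSpace ℝ (Fin (2*m))) (ε R μ : ℝ)
    (hε : 0 < ε) (hR : 0 < R) (cv : ℕ → ℝ) (i : ℕ) (him : i < m)
    (x : EuclideanSpace ℝ (Fin (2*m))) (hx : x ∈ Metric.sphere x₀ (ε*R)) :
    (radialDeriv i x₀ (fun y => -μ^2 + ∑ j ∈ Finset.range m, cv j * ‖y - x₀‖^(2*j)) x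
      = - radialDeriv i x₀ (fun y => μ^2 + eta0 m (ε⁻¹ • (y - x₀))
          + (2*(m:ℝ) / betaStar m) * Real.log ‖y - x₀‖) x)
    ↔ Tmap m (fun j : Fin m => cv (j:ℕ) * (ε*R)^(2*(j:ℕ))) ⟨i, him⟩ = vvec m ε R ⟨i, him⟩ := by
  have hr : 0 < ε*R := mul_pos hε hR
  rw [radialDeriv_poly x₀ x hr hx cv m (-μ^2) i, eval_iter_poly,
    radialDeriv_rhs m x₀ x ε R μ hε hR hx i, sum_identity m hr.ne' cv i]
  have hS : (∑ j : Fin m, (cv (j:ℕ) * (ε*R)^(2*(j:ℕ))) * (((2*(j:ℕ)).descFactorial i : ℝ)))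
      = Tmap m (fun j : Fin m => cv (j:ℕ) * (ε*R)^(2*(j:ℕ))) ⟨i, him⟩ := rfl
  rw [hS]
  have hq : (((ε*R)⁻¹)^i : ℝ) ≠ 0 := pow_ne_zero _ (inv_ne_zero hr.ne')
  set S := Tmap m (fun j : Fin m => cv (j:ℕ) * (ε*R)^(2*(j:ℕ))) ⟨i, him⟩ with hSdef
  have hvv : vvec m ε R ⟨i, him⟩
      = (if i = 0 then -(2*((m:ℝ)/betaStar m))*Real.log ε else 0)
        + gcoef ((m:ℝ)/betaStar m) ((R^2)⁻¹) i := rfl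
  rw [hvv]
  by_cases h0 : i = 0
  · subst h0
    simp only [eq_self_iff_true, if_true, if_pos, pow_zero, one_mul]
    constructor
    · intro h; linarith
    · intro h; linarith
  · rw [if_neg h0, if_neg h0, if_neg h0]
    constructor
    · intro h
      apply mul_left_cancel₀ hq
      rw [zero_add] at *
      linarith
    · intro h
      rw [zero_add, h]
      ring

end AuxStatement17

/-- for every `x₀` and `ε, R, μ > 0` there is a unique radially symmetric
polynomial `p(x) = −μ² + Σ_{j=0}^{m−1} c_j |x−x₀|^{2j}` whose radial derivatives of order
`0,…,m−1` on `∂B_{εR}(x₀)` are the negatives of those of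
`x ↦ μ² + η₀((x−x₀)/ε) + (2m/β*) log|x−x₀|`; moreover `c₀ = −(2m/β*) log(2ε) + d₀(R)` and
`c_j = (εR)^{−2j} d_j(R)` where `d_j` depends only on `m` and `R` and `d_j(R) = O(R^{−2})`. -/
theorem statement17 (m : ℕ) (hm : 1 ≤ m) :
    ∃ d : ℕ → ℝ → ℝ, ∃ C R₁ : ℝ, 0 < C ∧ 0 < R₁ ∧
      (∀ j < m, ∀ R : ℝ, R₁ ≤ R → |d j R| ≤ C * (R^2)⁻¹) ∧
      ∀ x₀ : EuclideanSpace ℝ (Fin (2*m)), ∀ ε R μ : ℝ, 0 < ε → 0 < R → 0 < μ →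
        ∃ c : ℕ → ℝ,
          ((∀ i < m, ∀ x ∈ Metric.sphere x₀ (ε*R),
              radialDeriv i x₀
                (fun y => -μ^2 + ∑ j ∈ Finset.range m, c j * ‖y - x₀‖^(2*j)) x
              = - radialDeriv i x₀
                  (fun y => μ^2 + eta0 m (ε⁻¹ • (y - x₀))
                    + (2*(m:ℝ) / betaStar m) * Real.log ‖y - x₀‖) x) ∧
            c 0 = -(2*(m:ℝ) / betaStar m) * Real.log (2*ε) + d 0 R ∧
            (∀ j, 1 ≤ j → j ≤ m - 1 → c j = ((ε*R)^(2*j))⁻¹ * d j R)) ∧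
          (∀ c' : ℕ → ℝ,
            (∀ i < m, ∀ x ∈ Metric.sphere x₀ (ε*R),
              radialDeriv i x₀
                (fun y => -μ^2 + ∑ j ∈ Finset.range m, c' j * ‖y - x₀‖^(2*j)) x
              = - radialDeriv i x₀
                  (fun y => μ^2 + eta0 m (ε⁻¹ • (y - x₀))
                    + (2*(m:ℝ) / betaStar m) * Real.log ‖y - x₀‖) x) →
            ∀ j < m, c' j = c j) := by
  classical
  have hβ := betaStar_pos m
  obtain ⟨Cg, hCgpos, hCg⟩ := gcoef_bound ((m:ℝ)/betaStar m) m
  obtain ⟨CT, hCTpos, hCT⟩ := Tequiv_symm_bound m hm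
  set B := (|(m:ℝ)/betaStar m|+1)*4 + Cg with hB
  have hBpos : 0 < B := by positivity
  have hwtb : ∀ R : ℝ, 1 ≤ R → ‖wtvec m R‖ ≤ B * (R^2)⁻¹ := by
    intro R hR
    have hR0 : 0 < R := lt_of_lt_of_le one_pos hR
    have hδ0 : (0:ℝ) ≤ (R^2)⁻¹ := by positivity
    have hδ1 : (R^2)⁻¹ ≤ 1 := by
      rw [inv_le_one₀ (by positivity)]
      nlinarith
    rw [pi_norm_le_iff_of_nonneg (by positivity)]
    intro i
    rw [Real.norm_eq_abs, wtvec]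
    by_cases h0 : (i:ℕ) = 0
    · rw [if_pos h0]
      have := gcoef_zero_bound ((m:ℝ)/betaStar m) ((R^2)⁻¹) hδ0
      have hCg0 : 0 ≤ Cg * (R^2)⁻¹ := mul_nonneg hCgpos.le hδ0
      rw [hB]; nlinarith
    · rw [if_neg h0]
      have h1 : 1 ≤ (i:ℕ) := by omega
      have h2 : (i:ℕ) ≤ m := le_of_lt i.isLt
      have := hCg (i:ℕ) h1 h2 ((R^2)⁻¹) ⟨hδ0, hδ1⟩
      have hex : 0 ≤ ((|(m:ℝ)/betaStar m|+1)*4) * (R^2)⁻¹ := by positivity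
      rw [hB]; nlinarith
  refine ⟨dfn m hm, CT*B + 1, 1, by positivity, one_pos, ?_, ?_⟩
  · intro j hj R hR
    rw [dfn, dif_pos hj]
    have h1 := hCT (wtvec m R) ⟨j, hj⟩
    have h2 : CT * ‖wtvec m R‖ ≤ CT * (B * (R^2)⁻¹) :=
      mul_le_mul_of_nonneg_left (hwtb R hR) hCTpos.le
    have hd0 : (0:ℝ) ≤ (R^2)⁻¹ := by positivity
    calc |((Tequiv m hm).symm (wtvec m R)) ⟨j, hj⟩| ≤ CT * (B * (R^2)⁻¹) := h1.trans h2
      _ ≤ (CT*B + 1) * (R^2)⁻¹ := by nlinarith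
  · intro x₀ ε R μ hε hR hμ
    have hr : 0 < ε*R := mul_pos hε hR
    have hTav : Tmap m (avec m hm ε R) = vvec m ε R := by
      have h := (Tequiv m hm).apply_symm_apply (vvec m ε R)
      rw [Tequiv_apply] at h
      exact h
    refine ⟨cfn m hm ε R, ⟨⟨?_, ?_, ?_⟩, ?_⟩⟩
    · intro i him x hx
      rw [key_iff m hm x₀ ε R μ hε hR (cfn m hm ε R) i him x hx]
      have hfun : (fun j : Fin m => cfn m hm ε R (j:ℕ) * (ε*R)^(2*(j:ℕ))) = avec m hm ε R := by
        funext j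
        rw [show cfn m hm ε R (j:ℕ)
            = ((ε*R)^(2*(j:ℕ)))⁻¹ * avec m hm ε R ⟨(j:ℕ), j.isLt⟩ from dif_pos j.isLt]
        rw [Fin.eta]
        field_simp
      rw [hfun, hTav]
    · rw [show cfn m hm ε R 0 = ((ε*R)^(2*0))⁻¹ * avec m hm ε R ⟨0, hm⟩ from dif_pos hm]
      rw [avec_eq m hm ε R hε ⟨0, hm⟩]
      norm_num
      ring
    · intro j hj1 hjm
      have hjm' : j < m := by omega
      rw [show cfn m hm ε R j = ((ε*R)^(2*j))⁻¹ * avec m hm ε R ⟨j, hjm'⟩ from dif_pos hjm']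
      rw [avec_eq m hm ε R hε ⟨j, hjm'⟩]
      rw [if_neg (by simpa using (by omega : j ≠ 0))]
      rw [show dfn m hm (↑(⟨j, hjm'⟩ : Fin m)) R = dfn m hm j R from rfl]
      ring
    · intro c' hc' j hjm
      have h2m : 0 < 2*m := by omega
      set xh := x₀ + (ε*R) • (EuclideanSpace.single (⟨0, h2m⟩ : Fin (2*m)) (1:ℝ)) with hxh
      have hxs : xh ∈ Metric.sphere x₀ (ε*R) := by
        rw [mem_sphere_iff_norm, hxh, add_sub_cancel_left, norm_smul,
          EuclideanSpace.norm_single]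
        simp [abs_of_pos hr, abs_of_pos hε, abs_of_pos hR]
      have hfa : (fun j : Fin m => c' (j:ℕ) * (ε*R)^(2*(j:ℕ))) = avec m hm ε R := by
        apply Tmap_injective m hm
        funext i
        have h := (key_iff m hm x₀ ε R μ hε hR c' (i:ℕ) i.isLt xh hxs).mp
          (hc' (i:ℕ) i.isLt xh hxs)
        rw [Fin.eta] at h
        rw [h, hTav]
      have hcj : c' j * (ε*R)^(2*j) = avec m hm ε R ⟨j, hjm⟩ := by
        have := congrFun hfa ⟨j, hjm⟩
        simpa using this
      rw [show cfn m hm ε R j = ((ε*R)^(2*j))⁻¹ * avec m hm ε R ⟨j, hjm⟩ from dif_pos hjm]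
      rw [← hcj]
      field_simp
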